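/- Let $P$ be the transition matrix of a finite irreducible Markov chain, let $g \in \mathbb{R}^n$ be a cost vector, and fix a state $s^\ast$. Define $\xi(s)$ as the expected total cost accumulated until the first visit to $s^\ast$ starting from $s$ (with $\xi(s^\ast)$ the expected cost of a full return cycle), and $o(s)$ as the expected number of steps until first visiting $s^\ast$ from $s$ (with $o(s^\ast)$ the expected return time). Setting $\zeta = \xi(s^\ast)/o(s^\ast)$ and $b(s) = \xi(s) - \zeta \, o(s)$, the pair $(\zeta, b)$ satisfies the average-cost optimality equation $\zeta + b(s) = g(s) + \sum_{s'} P(s,s') b(s')$ for every state $s$. -/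

import Mathlib

/-- Gain-bias characterization for the average-cost-per-stage problem (Lemma 2): if
`ξ` and `o` satisfy the first-passage cost and time equations with respect to a
distinguished state `s*` of a finite irreducible Markov chain with transition matrix
`P` and cost `g`, then `ζ = ξ(s*)/o(s*)` and `b(s) = ξ(s) - ζ o(s)` satisfy the
average-cost optimality equation `ζ + b(s) = g(s) + ∑_{s'} P(s,s') b(s')`. -/
theorem stmt_16 {n : ℕ} (P : Matrix (Fin n) (Fin n) ℝ)
    (hPnn : ∀ i j, 0 ≤ P i j) (hProw : ∀ i, ∑ j, P i j = 1)
    (hirr : ∀ i j, ∃ t : ℕ, 0 < (P ^ t) i j)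
    (g : Fin n → ℝ) (sstar : Fin n) (ξ o : Fin n → ℝ)
    (hξ : ∀ s, ξ s = g s + ∑ k ∈ Finset.univ.erase sstar, P s k * ξ k)
    (ho : ∀ s, o s = 1 + ∑ k ∈ Finset.univ.erase sstar, P s k * o k)
    (hopos : 0 < o sstar)
    (ζ : ℝ) (hζ : ζ = ξ sstar / o sstar)
    (b : Fin n → ℝ) (hb : ∀ s, b s = ξ s - ζ * o s) :
    ∀ s, ζ + b s = g s + ∑ s', P s s' * b s' := by
  intro s
  have hbs : b sstar = 0 := by
    rw [hb sstar, hζ]; field_simp; ring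
  have hsplit : ∑ s', P s s' * b s'
      = ∑ k ∈ Finset.univ.erase sstar, P s k * b k := by
    rw [← Finset.add_sum_erase _ (fun k => P s k * b k) (Finset.mem_univ sstar), hbs,
      mul_zero, zero_add]
  have hbsum : ∑ k ∈ Finset.univ.erase sstar, P s k * b k
      = (∑ k ∈ Finset.univ.erase sstar, P s k * ξ k)
        - ζ * ∑ k ∈ Finset.univ.erase sstar, P s k * o k := by
    rw [Finset.mul_sum, ← Finset.sum_sub_distrib]
    exact Finset.sum_congr rfl fun k _ => by rw [hb k]; ring
  have h1 : ∑ k ∈ Finset.univ.erase sstar, P s k * ξ k = ξ s - g s := by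
    have := hξ s; linarith
  have h2 : ∑ k ∈ Finset.univ.erase sstar, P s k * o k = o s - 1 := by
    have := ho s; linarith
  rw [hsplit, hbsum, h1, h2, hb s]
  ring
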